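/- arXiv:2309.04150 — 2 statements merged into one kernel-verified Lean document; each statement's English description precedes it below -/
import Mathlib

section
/- Let S ⊆ ℝ² be a compact convex body with nonempty interior, and let α : [0,1] → ℝ² be a line segment with α(0), α(1) ∈ frontier S, α(0) ≠ α(1), whose interior points lie in interior S. Then (interior S) \ (range α) has exactly two connected components. -/
open Set


lemma two_components_of_union {E : Type*} [TopologicalSpace E] {U V : Set E}
    (hUo : IsOpen U) (hVo : IsOpen V) (hUc : IsConnected U) (hVc : IsConnected V)
    (hdisj : Disjoint U V) :
    Nat.card (ConnectedComponents ↥(U ∪ V)) = 2 := by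
  classical
  set X := ↥(U ∪ V)
  have hval : Continuous (Subtype.val : X → E) := continuous_subtype_val
  set g : X → Bool := fun x => decide (x.val ∈ U) with hg
  have hpreT : g ⁻¹' {true} = Subtype.val ⁻¹' U := by
    ext x; simp [hg]
  have hpreF : g ⁻¹' {false} = Subtype.val ⁻¹' V := by
    ext x
    simp only [hg, mem_preimage, mem_singleton_iff, decide_eq_false_iff_not]
    constructor
    · intro h; rcases x.2 with h' | h'
      · exact absurd h' h
      · exact h'
    · intro h; exact fun hU => hdisj.ne_of_mem hU h rfl
  have hgc : Continuous g := by
    rw [continuous_discrete_rng]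
    intro bb
    cases bb
    · rw [hpreF]; exact hVo.preimage hval
    · rw [hpreT]; exact hUo.preimage hval
  have key : ∀ x y : X, g x = g y → (x : ConnectedComponents X) = y := by
    intro x y hxy
    have conn : ∀ W : Set E, IsOpen W → IsConnected W → W ⊆ U ∪ V →
        x.val ∈ W → y.val ∈ W → (x : ConnectedComponents X) = y := by
      intro W _hWo hWc hWsub hxW hyW
      rw [ConnectedComponents.coe_eq_coe]
      have hpre : IsPreconnected ((Subtype.val : X → E) ⁻¹' W) := by
        rw [← Topology.IsInducing.subtypeVal.isPreconnected_image]
        have : (Subtype.val : X → E) '' (Subtype.val ⁻¹' W) = W := by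
          rw [Subtype.image_preimage_coe]
          exact inf_eq_right.mpr hWsub
        rw [this]; exact hWc.isPreconnected
      have h1 : x ∈ connectedComponent y :=
        hpre.subset_connectedComponent (hyW : y ∈ _) (hxW : x ∈ _)
      exact (connectedComponent_eq h1).symm
    rcases x.2 with hx | hx
    · rcases y.2 with hy | hy
      · exact conn U hUo hUc subset_union_left hx hy
      · exfalso
        have : g x = true := by simp [hg, hx]
        have : g y = true := hxy ▸ this
        have hyU : y.val ∈ U := by simpa [hg] using this
        exact hdisj.ne_of_mem hyU hy rfl
    · rcases y.2 with hy | hy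
      · exfalso
        have : g y = true := by simp [hg, hy]
        have : g x = true := hxy ▸ this
        have hxU : x.val ∈ U := by simpa [hg] using this
        exact hdisj.ne_of_mem hxU hx rfl
      · exact conn V hVo hVc subset_union_right hx hy
  obtain ⟨u, hu⟩ := hUc.nonempty
  obtain ⟨v, hv⟩ := hVc.nonempty
  have hG : Function.Bijective (hgc.connectedComponentsLift) := by
    constructor
    · intro p q hpq
      obtain ⟨x, rfl⟩ := ConnectedComponents.surjective_coe p
      obtain ⟨y, rfl⟩ := ConnectedComponents.surjective_coe q
      rw [hgc.connectedComponentsLift_apply_coe, hgc.connectedComponentsLift_apply_coe] at hpq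
      exact key x y hpq
    · intro bb
      cases bb
      · exact ⟨(⟨v, Or.inr hv⟩ : X), by
          rw [hgc.connectedComponentsLift_apply_coe]
          have : v ∉ U := fun h => hdisj.ne_of_mem h hv rfl
          simp [hg, this]⟩
      · exact ⟨(⟨u, Or.inl hu⟩ : X), by
          rw [hgc.connectedComponentsLift_apply_coe]; simp [hg, hu]⟩
  rw [Nat.card_eq_of_bijective _ hG]
  simp

set_option maxHeartbeats 1000000 in
theorem chord_splits_interior_into_two_components
    (S : Set (EuclideanSpace ℝ (Fin 2)))
    (hScomp : IsCompact S) (hSconv : Convex ℝ S)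
    (hSint : (interior S).Nonempty)
    (a b : EuclideanSpace ℝ (Fin 2))
    (ha : a ∈ frontier S) (hb : b ∈ frontier S) (hab : a ≠ b)
    (α : ℝ → EuclideanSpace ℝ (Fin 2))
    (hα : ∀ t : ℝ, α t = (1 - t) • a + t • b)
    (hint : ∀ t ∈ Ioo (0:ℝ) 1, α t ∈ interior S) :
    Nat.card (ConnectedComponents ↥(interior S \ α '' Icc (0:ℝ) 1)) = 2 := by
  classical
  set L : EuclideanSpace ℝ (Fin 2) →L[ℝ] ℝ :=
    (b 1 - a 1) • EuclideanSpace.proj (0 : Fin 2) - (b 0 - a 0) • EuclideanSpace.proj (1 : Fin 2)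
    with hL
  have hLapp : ∀ x : EuclideanSpace ℝ (Fin 2),
      L x = (b 1 - a 1) * x 0 - (b 0 - a 0) * x 1 := by
    intro x
    simp [hL, ContinuousLinearMap.sub_apply, ContinuousLinearMap.smul_apply,
      smul_eq_mul]
  have hLb : L b = L a := by rw [hLapp, hLapp]; ring
  have hSclosed : IsClosed S := hScomp.isClosed
  have hbS : b ∈ S := by
    have := hb.1; rwa [hSclosed.closure_eq] at this
  have haS : a ∈ S := by
    have := ha.1; rwa [hSclosed.closure_eq] at this
  have haI : a ∉ interior S := fun h => ha.2 h
  have hbI : b ∉ interior S := fun h => hb.2 h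
  have hne : b 0 - a 0 ≠ 0 ∨ b 1 - a 1 ≠ 0 := by
    by_contra h
    push_neg at h
    apply hab
    ext i
    fin_cases i
    · exact (sub_eq_zero.mp h.1).symm
    · exact (sub_eq_zero.mp h.2).symm
  have hseg : α '' Icc (0:ℝ) 1 = segment ℝ a b := by
    rw [segment_eq_image]
    exact image_congr fun t _ => hα t
  -- L is constant on the line through a and b
  have hLconst : ∀ t : ℝ, L ((1 - t) • a + t • b) = L a := by
    intro t
    rw [map_add, map_smul, map_smul, smul_eq_mul, smul_eq_mul, hLb]
    ring
  -- interior points with L x = L a are on the open segment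
  have hline : ∀ x ∈ interior S, L x = L a → x ∈ segment ℝ a b := by
    intro x hx hLx
    have hkey : (b 1 - a 1) * (x 0 - a 0) = (b 0 - a 0) * (x 1 - a 1) := by
      rw [hLapp, hLapp] at hLx; linear_combination hLx
    obtain ⟨s, hs⟩ : ∃ s : ℝ, x = (1 - s) • a + s • b := by
      rcases hne with h0 | h1
      · refine ⟨(x 0 - a 0) / (b 0 - a 0), ?_⟩
        have c0 : x 0 = (1 - (x 0 - a 0) / (b 0 - a 0)) * a 0
            + (x 0 - a 0) / (b 0 - a 0) * b 0 := by
          field_simp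
          ring
        have c1 : x 1 = (1 - (x 0 - a 0) / (b 0 - a 0)) * a 1
            + (x 0 - a 0) / (b 0 - a 0) * b 1 := by
          field_simp
          linear_combination -hkey
        ext i
        fin_cases i
        · simpa [PiLp.add_apply, PiLp.smul_apply] using c0
        · simpa [PiLp.add_apply, PiLp.smul_apply] using c1
      · refine ⟨(x 1 - a 1) / (b 1 - a 1), ?_⟩
        have c0 : x 0 = (1 - (x 1 - a 1) / (b 1 - a 1)) * a 0
            + (x 1 - a 1) / (b 1 - a 1) * b 0 := by
          field_simp
          linear_combination hkey
        have c1 : x 1 = (1 - (x 1 - a 1) / (b 1 - a 1)) * a 1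
            + (x 1 - a 1) / (b 1 - a 1) * b 1 := by
          field_simp
          ring
        ext i
        fin_cases i
        · simpa [PiLp.add_apply, PiLp.smul_apply] using c0
        · simpa [PiLp.add_apply, PiLp.smul_apply] using c1
    have hs01 : s ∈ Icc (0:ℝ) 1 := by
      constructor
      · by_contra hneg
        push_neg at hneg
        -- s < 0 : then a is a convex combo of x (interior) and b
        have h1s : (0:ℝ) < 1 - s := by linarith
        have hcombo : (1 / (1 - s)) • x + (-s / (1 - s)) • b = a := by
          rw [hs]
          match_scalars <;> field_simp <;> ring
        exact haI (hcombo ▸ hSconv.combo_interior_self_mem_interior hx hbS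
          (one_div_pos.mpr h1s) (div_nonneg (by linarith) (by linarith))
          (by field_simp; ring))
      · by_contra hgt
        push_neg at hgt
        have hspos : (0:ℝ) < s := by linarith
        have hcombo : (1 / s) • x + ((s - 1) / s) • a = b := by
          rw [hs]
          match_scalars <;> field_simp <;> ring
        exact hbI (hcombo ▸ hSconv.combo_interior_self_mem_interior hx haS
          (one_div_pos.mpr hspos) (div_nonneg (by linarith) (by linarith))
          (by field_simp; ring))
    rw [segment_eq_image]
    exact ⟨s, hs01, hs.symm⟩

  have hLsegconst : ∀ x ∈ segment ℝ a b, L x = L a := by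
    intro x hxs
    rw [segment_eq_image] at hxs
    obtain ⟨t, _, rfl⟩ := hxs
    exact hLconst t
  set U : Set (EuclideanSpace ℝ (Fin 2)) := interior S ∩ {x | L x < L a} with hU
  set V : Set (EuclideanSpace ℝ (Fin 2)) := interior S ∩ {x | L a < L x} with hV
  have hXeq : interior S \ α '' Icc (0:ℝ) 1 = U ∪ V := by
    rw [hseg]
    ext x
    simp only [hU, hV, mem_diff, mem_union, mem_inter_iff, mem_setOf_eq]
    constructor
    · rintro ⟨hxI, hxseg⟩
      rcases lt_trichotomy (L x) (L a) with h | h | h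
      · exact Or.inl ⟨hxI, h⟩
      · exact absurd (hline x hxI h) hxseg
      · exact Or.inr ⟨hxI, h⟩
    · rintro (⟨hxI, h⟩ | ⟨hxI, h⟩)
      · exact ⟨hxI, fun hsg => (ne_of_lt h) (hLsegconst x hsg)⟩
      · exact ⟨hxI, fun hsg => (ne_of_gt h) (hLsegconst x hsg)⟩
  -- nonemptiness of both sides
  have hm : α (1/2) ∈ interior S := hint _ ⟨by norm_num, by norm_num⟩
  set m := α (1/2) with hmdef
  have hLm : L m = L a := by rw [hmdef, hα]; exact hLconst _
  obtain ⟨w, hw0, hw1⟩ : ∃ w : EuclideanSpace ℝ (Fin 2),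
      w 0 = b 1 - a 1 ∧ w 1 = -(b 0 - a 0) :=
    ⟨(b 1 - a 1) • EuclideanSpace.single (0 : Fin 2) (1:ℝ)
      - (b 0 - a 0) • EuclideanSpace.single (1 : Fin 2) (1:ℝ),
      by simp [EuclideanSpace.single_apply],
      by simp [EuclideanSpace.single_apply]⟩
  have hLw : 0 < L w := by
    rw [hLapp, hw0, hw1]
    rcases hne with h | h
    · nlinarith [mul_self_pos.mpr h, mul_self_nonneg (b 1 - a 1)]
    · nlinarith [mul_self_pos.mpr h, mul_self_nonneg (b 0 - a 0)]
  obtain ⟨ε, hε, hball⟩ := Metric.isOpen_iff.mp isOpen_interior m hm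
  obtain ⟨δ, hδpos, hδε⟩ : ∃ δ : ℝ, 0 < δ ∧ δ * ‖w‖ < ε := by
    refine ⟨ε / (2 * (‖w‖ + 1)), by positivity, ?_⟩
    have hwn : (0:ℝ) < ‖w‖ + 1 := by positivity
    have hmul : ε / (2 * (‖w‖ + 1)) * (2 * (‖w‖ + 1)) = ε := by
      field_simp
    nlinarith [norm_nonneg w, div_pos hε (by positivity : (0:ℝ) < 2 * (‖w‖ + 1))]
  have hmemp : m + δ • w ∈ interior S := by
    apply hball
    rw [Metric.mem_ball, dist_eq_norm, add_sub_cancel_left, norm_smul, Real.norm_eq_abs,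
      abs_of_pos hδpos]
    exact hδε
  have hmemq : m - δ • w ∈ interior S := by
    apply hball
    rw [Metric.mem_ball, dist_eq_norm, sub_sub_cancel_left, norm_neg, norm_smul,
      Real.norm_eq_abs, abs_of_pos hδpos]
    exact hδε
  have hVne : (m + δ • w) ∈ V := by
    refine ⟨hmemp, ?_⟩
    show L a < L (m + δ • w)
    rw [map_add, map_smul, hLm, smul_eq_mul]
    nlinarith
  have hUne : (m - δ • w) ∈ U := by
    refine ⟨hmemq, ?_⟩
    show L (m - δ • w) < L a
    rw [map_sub, map_smul, hLm, smul_eq_mul]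
    nlinarith
  have hLlin : IsLinearMap ℝ (fun x => L x) := ⟨fun x y => L.map_add x y, fun c x => L.map_smul c x⟩
  have hUopen : IsOpen U := isOpen_interior.inter (isOpen_lt L.continuous continuous_const)
  have hVopen : IsOpen V := isOpen_interior.inter (isOpen_lt continuous_const L.continuous)
  have hUconn : IsConnected U :=
    (hSconv.interior.inter (convex_halfSpace_lt hLlin (L a))).isConnected ⟨_, hUne⟩
  have hVconn : IsConnected V :=
    (hSconv.interior.inter (convex_halfSpace_gt hLlin (L a))).isConnected ⟨_, hVne⟩
  have hdisj : Disjoint U V := by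
    rw [Set.disjoint_left]
    rintro x ⟨_, hx⟩ ⟨_, hy⟩
    simp only [mem_setOf_eq] at hx hy
    exact lt_asymm hx hy
  rw [hXeq]
  exact two_components_of_union hUopen hVopen hUconn hVconn hdisj
end

section
/- Through any point q outside a compact strictly convex body K ⊆ ℝ² with nonempty interior, there exist exactly two lines through q tangent to K. -/
open Set

def IsLine (L : Set (EuclideanSpace ℝ (Fin 2))) : Prop :=
  ∃ a v : EuclideanSpace ℝ (Fin 2), v ≠ 0 ∧ L = {x | ∃ t : ℝ, x = a + t • v}

def IsTangentLine (L K : Set (EuclideanSpace ℝ (Fin 2))) : Prop :=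
  (L ∩ K).Nonempty ∧ L ∩ interior K = ∅

section Aux

abbrev E2 := EuclideanSpace ℝ (Fin 2)

def lineThrough (q p : E2) : Set E2 := {x | ∃ t : ℝ, x = q + t • (p - q)}

lemma mem_lineThrough_self (q p : E2) : p ∈ lineThrough q p := ⟨1, by simp⟩
lemma q_mem_lineThrough (q p : E2) : q ∈ lineThrough q p := ⟨0, by simp⟩

lemma isLine_lineThrough {q p : E2} (h : p ≠ q) : IsLine (lineThrough q p) :=
  ⟨q, p - q, sub_ne_zero.2 h, rfl⟩

lemma line_eq_lineThrough {L : Set E2} {q p : E2} (hL : IsLine L) (hqL : q ∈ L) (hpL : p ∈ L)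
    (hne : p ≠ q) : L = lineThrough q p := by
  obtain ⟨a, v, hv, rfl⟩ := hL
  obtain ⟨s, hs⟩ := hqL
  obtain ⟨r, hr⟩ := hpL
  have hpq : p - q = (r - s) • v := by rw [hr, hs]; module
  have hrs : r - s ≠ 0 := by
    intro h
    exact hne (by rw [hr, hs, sub_eq_zero.1 h])
  ext x
  simp only [lineThrough, mem_setOf_eq]
  constructor
  · rintro ⟨t, rfl⟩
    exact ⟨(t - s)/(r - s), by rw [hpq, smul_smul, div_mul_cancel₀ _ hrs, hs]; module⟩
  · rintro ⟨t, rfl⟩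
    exact ⟨s + t*(r - s), by rw [hpq, hs]; module⟩

noncomputable def fnum (a b : ℝ) (q x : E2) : ℝ := -b * (x 0 - q 0) + a * (x 1 - q 1)
noncomputable def fden (a b : ℝ) (q x : E2) : ℝ := a * (x 0 - q 0) + b * (x 1 - q 1)
noncomputable def fv (a b : ℝ) (q x : E2) : ℝ := fnum a b q x / fden a b q x

lemma e2_ext {x y : E2} (h0 : x 0 = y 0) (h1 : x 1 = y 1) : x = y := by
  ext i; fin_cases i
  · exact h0
  · exact h1

lemma alg1 {a b d0 d1 e0 e1 : ℝ} (hab : a^2 + b^2 ≠ 0)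
    (hf : (-b*d0 + a*d1) * (a*e0 + b*e1) = (-b*e0 + a*e1) * (a*d0 + b*d1)) :
    d1 * e0 = d0 * e1 := by
  have key : (a^2+b^2) * (d1*e0 - d0*e1) = 0 := by linear_combination hf
  rcases mul_eq_zero.1 key with h | h
  · exact absurd h hab
  · linarith

lemma mem_lineThrough_of_fv_eq {a b : ℝ} {q p p' : E2} (hab : a^2 + b^2 ≠ 0)
    (hp : 0 < fden a b q p) (hp' : 0 < fden a b q p')
    (hf : fv a b q p = fv a b q p') : p' ∈ lineThrough q p := by
  have hdp := hp.ne'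
  have hdp' := hp'.ne'
  rw [fv, fv, div_eq_div_iff hdp hdp'] at hf
  rw [fnum, fnum, fden, fden] at hf
  have hpar : (p 1 - q 1) * (p' 0 - q 0) = (p 0 - q 0) * (p' 1 - q 1) := alg1 hab hf
  refine ⟨fden a b q p' / fden a b q p, ?_⟩
  have h0 : fden a b q p * (p' 0 - q 0) = fden a b q p' * (p 0 - q 0) := by
    rw [fden, fden]; linear_combination b * hpar
  have h1 : fden a b q p * (p' 1 - q 1) = fden a b q p' * (p 1 - q 1) := by
    rw [fden, fden]; linear_combination (-a) * hpar
  refine e2_ext ?_ ?_ <;>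
    simp only [PiLp.add_apply, PiLp.smul_apply, PiLp.sub_apply, smul_eq_mul]
  · have : p' 0 - q 0 = fden a b q p' / fden a b q p * (p 0 - q 0) := by
      field_simp; linear_combination h0
    linarith
  · have : p' 1 - q 1 = fden a b q p' / fden a b q p * (p 1 - q 1) := by
      field_simp; linear_combination h1
    linarith

lemma fv_eq_of_mem_lineThrough {a b : ℝ} {q p p' : E2}
    (hp : 0 < fden a b q p) (hp' : 0 < fden a b q p')
    (hmem : p' ∈ lineThrough q p) : fv a b q p' = fv a b q p := by
  obtain ⟨t, rfl⟩ := hmem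
  have hc0 : (q + t • (p - q)) 0 - q 0 = t * (p 0 - q 0) := by
    simp only [PiLp.add_apply, PiLp.smul_apply, PiLp.sub_apply, smul_eq_mul]; ring
  have hc1 : (q + t • (p - q)) 1 - q 1 = t * (p 1 - q 1) := by
    simp only [PiLp.add_apply, PiLp.smul_apply, PiLp.sub_apply, smul_eq_mul]; ring
  have hden : fden a b q (q + t • (p - q)) = t * fden a b q p := by
    rw [fden, fden, hc0, hc1]; ring
  have hnum : fnum a b q (q + t • (p - q)) = t * fnum a b q p := by
    rw [fnum, fnum, hc0, hc1]; ring
  have ht : t ≠ 0 := by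
    intro h; rw [hden, h, zero_mul] at hp'; exact lt_irrefl _ hp'
  rw [fv, fv, hden, hnum, mul_div_mul_left _ _ ht]

end Aux

set_option maxHeartbeats 1000000 in
theorem exactly_two_tangent_lines_through_exterior_point
    (K : Set (EuclideanSpace ℝ (Fin 2)))
    (hcomp : IsCompact K) (hconv : Convex ℝ K) (hint : (interior K).Nonempty)
    (hstrict : ∀ x ∈ K, ∀ y ∈ K, x ≠ y → ∀ t ∈ Ioo (0:ℝ) 1,
      (1 - t) • x + t • y ∈ interior K)
    (q : EuclideanSpace ℝ (Fin 2)) (hq : q ∉ K) :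
    {L | IsLine L ∧ q ∈ L ∧ IsTangentLine L K}.ncard = 2 := by
  classical
  obtain ⟨φ, c, hφq, hφK⟩ := geometric_hahn_banach_point_closed hconv hcomp.isClosed hq
  set e0 : E2 := EuclideanSpace.single 0 1 with he0
  set e1 : E2 := EuclideanSpace.single 1 1 with he1
  set a : ℝ := φ e0 with ha
  set b : ℝ := φ e1 with hb
  have hdec : ∀ x : E2, x = x 0 • e0 + x 1 • e1 := by
    intro x
    refine e2_ext ?_ ?_ <;> simp [he0, he1, EuclideanSpace.single_apply]
  have hφ : ∀ x : E2, φ x = x 0 * a + x 1 * b := by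
    intro x
    conv_lhs => rw [hdec x]
    simp [smul_eq_mul, ha, hb]
  obtain ⟨x₀, hx₀⟩ := hint
  have hx₀K : x₀ ∈ K := interior_subset hx₀
  have hden_pos : ∀ x ∈ K, 0 < fden a b q x := by
    intro x hx
    have h1 := hφK x hx
    rw [fden]
    have e1 := hφ x; have e2 := hφ q
    nlinarith [hφq]
  have habpos : 0 < a^2 + b^2 := by
    by_contra hcon
    push_neg at hcon
    have ha0 : a = 0 := by nlinarith [sq_nonneg a, sq_nonneg b]
    have hb0 : b = 0 := by nlinarith [sq_nonneg a, sq_nonneg b]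
    have h1 := hφK x₀ hx₀K
    have h2 := hφq
    rw [hφ x₀, ha0, hb0] at h1
    rw [hφ q, ha0, hb0] at h2
    simp only [mul_zero, add_zero, zero_add] at h1 h2
    linarith
  have hab : a^2 + b^2 ≠ 0 := habpos.ne'
  -- the perpendicular direction
  set v : E2 := b • e0 + (-a) • e1 with hv
  have hvc0 : v 0 = b := by simp [hv, he0, he1, EuclideanSpace.single_apply]
  have hvc1 : v 1 = -a := by simp [hv, he0, he1, EuclideanSpace.single_apply]
  have hvne : v ≠ 0 := by
    intro h
    have h0 : v 0 = 0 := by rw [h]; rfl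
    have h1 : v 1 = 0 := by rw [h]; rfl
    rw [hvc0] at h0; rw [hvc1] at h1
    nlinarith
  have hvnorm : 0 < ‖v‖ := norm_pos_iff.2 hvne
  have hshift : ∀ (t : ℝ) (x : E2),
      fden a b q (x + t • v) = fden a b q x ∧
      fnum a b q (x + t • v) = fnum a b q x - t * (a^2 + b^2) := by
    intro t x
    constructor <;>
      · simp only [fden, fnum, PiLp.add_apply, PiLp.smul_apply, smul_eq_mul, hvc0, hvc1]
        ring
  -- perturbation: at an interior point, fv takes both smaller and larger values nearby
  have hpert : ∀ x ∈ interior K, (∃ y ∈ K, fv a b q y < fv a b q x) ∧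
      (∃ z ∈ K, fv a b q x < fv a b q z) := by
    intro x hx
    have hxK : x ∈ K := interior_subset hx
    obtain ⟨ε, hε, hball⟩ := Metric.mem_nhds_iff.1 (mem_interior_iff_mem_nhds.1 hx)
    set t : ℝ := ε / (2 * ‖v‖) with htdef
    have ht : 0 < t := div_pos hε (by positivity)
    have hmem : ∀ s : ℝ, |s| = t → x + s • v ∈ K := by
      intro s hs
      apply hball
      rw [Metric.mem_ball, dist_eq_norm]
      have : x + s • v - x = s • v := by abel
      rw [this, norm_smul, Real.norm_eq_abs, hs]
      rw [htdef]
      rw [div_mul_eq_mul_div]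
      rw [div_lt_iff₀ (by positivity)]
      nlinarith
    have hdx := hden_pos x hxK
    constructor
    · refine ⟨x + t • v, hmem t (abs_of_pos ht), ?_⟩
      obtain ⟨hd, hn⟩ := hshift t x
      rw [fv, fv, hd, hn]
      rw [div_lt_div_iff₀ hdx hdx]
      nlinarith [mul_pos (mul_pos ht habpos) hdx]
    · refine ⟨x + (-t) • v, hmem (-t) (by rw [abs_neg, abs_of_pos ht]), ?_⟩
      obtain ⟨hd, hn⟩ := hshift (-t) x
      rw [fv, fv, hd, hn]
      rw [div_lt_div_iff₀ hdx hdx]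
      nlinarith [mul_pos (mul_pos ht habpos) hdx]
  -- continuity of fv on K
  have hc0 : Continuous fun x : E2 => x 0 := (continuous_apply 0).comp (PiLp.continuous_ofLp 2 _)
  have hc1 : Continuous fun x : E2 => x 1 := (continuous_apply 1).comp (PiLp.continuous_ofLp 2 _)
  have hcnum : Continuous (fnum a b q) := by
    unfold fnum; fun_prop
  have hcden : Continuous (fden a b q) := by
    unfold fden; fun_prop
  have hcont : ContinuousOn (fv a b q) K := by
    apply ContinuousOn.div hcnum.continuousOn hcden.continuousOn
    intro x hx; exact (hden_pos x hx).ne'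
  have hKne : K.Nonempty := ⟨x₀, hx₀K⟩
  obtain ⟨p₁, hp₁K, hmin⟩ := hcomp.exists_isMinOn hKne hcont
  obtain ⟨p₂, hp₂K, hmax⟩ := hcomp.exists_isMaxOn hKne hcont
  have hmin' := isMinOn_iff.1 hmin
  have hmax' := isMaxOn_iff.1 hmax
  -- strict inequality between min and max values
  have hlt : fv a b q p₁ < fv a b q p₂ := by
    obtain ⟨⟨y, hyK, hy⟩, ⟨z, hzK, hz⟩⟩ := hpert x₀ hx₀
    calc fv a b q p₁ ≤ fv a b q y := hmin' y hyK
    _ < fv a b q x₀ := hy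
    _ < fv a b q z := hz
    _ ≤ fv a b q p₂ := hmax' z hzK
  have hp₁q : p₁ ≠ q := fun h => hq (h ▸ hp₁K)
  have hp₂q : p₂ ≠ q := fun h => hq (h ▸ hp₂K)
  -- tangency: extreme lines avoid the interior
  have htan : ∀ p ∈ K, (fv a b q p = fv a b q p₁ ∨ fv a b q p = fv a b q p₂) →
      lineThrough q p ∩ interior K = ∅ := by
    intro p hpK hfp
    rw [eq_empty_iff_forall_notMem]
    rintro x ⟨hxL, hxI⟩
    have hxK : x ∈ K := interior_subset hxI
    have hfx : fv a b q x = fv a b q p :=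
      fv_eq_of_mem_lineThrough (hden_pos p hpK) (hden_pos x hxK) hxL
    obtain ⟨⟨y, hyK, hy⟩, ⟨z, hzK, hz⟩⟩ := hpert x hxI
    rcases hfp with h | h
    · have := hmin' y hyK; rw [hfx, h] at hy; linarith
    · have := hmax' z hzK; rw [hfx, h] at hz; linarith
  -- intermediate lines meet the interior
  have hmid : ∀ p ∈ K, fv a b q p₁ < fv a b q p → fv a b q p < fv a b q p₂ →
      (lineThrough q p ∩ interior K).Nonempty := by
    intro p hpK h1 h2
    have hne12 : p₁ ≠ p₂ := by intro h; rw [h] at hlt; exact lt_irrefl _ hlt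
    obtain ⟨γ, hγ⟩ : ∃ γ : ℝ → EuclideanSpace ℝ (Fin 2),
        γ = fun s => (1 - s) • p₁ + s • p₂ := ⟨_, rfl⟩
    have hγc : Continuous γ := by rw [hγ]; fun_prop
    have hγK : ∀ s ∈ Icc (0:ℝ) 1, γ s ∈ K := by
      intro s hs
      rw [hγ]
      exact hconv hp₁K hp₂K (by linarith [hs.2]) hs.1 (by ring)
    have hγ0 : γ 0 = p₁ := by rw [hγ]; simp
    have hγ1 : γ 1 = p₂ := by rw [hγ]; simp
    have hgc : ContinuousOn (fun s => fv a b q (γ s)) (Icc 0 1) :=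
      hcont.comp hγc.continuousOn hγK
    have hIcc := intermediate_value_Icc (zero_le_one) hgc
    rw [hγ0, hγ1] at hIcc
    obtain ⟨s, hs, hgs'⟩ := hIcc ⟨le_of_lt h1, le_of_lt h2⟩
    have hgs : fv a b q (γ s) = fv a b q p := hgs'
    have hs0 : s ≠ 0 := by
      intro h; rw [h, hγ0] at hgs; rw [hgs] at h1; exact lt_irrefl _ h1
    have hs1 : s ≠ 1 := by
      intro h; rw [h, hγ1] at hgs; rw [hgs] at h2; exact lt_irrefl _ h2
    have hsIoo : s ∈ Ioo (0:ℝ) 1 := ⟨hs.1.lt_of_ne (Ne.symm hs0), hs.2.lt_of_ne hs1⟩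
    have hγint : γ s ∈ interior K := by
      rw [hγ]; exact hstrict p₁ hp₁K p₂ hp₂K hne12 s hsIoo
    have hγsK : γ s ∈ K := interior_subset hγint
    have hmem : γ s ∈ lineThrough q p :=
      mem_lineThrough_of_fv_eq hab (hden_pos p hpK) (hden_pos _ hγsK) hgs.symm
    exact ⟨γ s, hmem, hγint⟩
  -- lines are distinct
  have hLne : lineThrough q p₁ ≠ lineThrough q p₂ := by
    intro h
    have hmem : p₂ ∈ lineThrough q p₁ := h ▸ mem_lineThrough_self q p₂
    have := fv_eq_of_mem_lineThrough (hden_pos p₁ hp₁K) (hden_pos p₂ hp₂K) hmem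
    rw [this] at hlt; exact lt_irrefl _ hlt
  -- the set of tangent lines through q
  have hset : {L | IsLine L ∧ q ∈ L ∧ IsTangentLine L K} =
      {lineThrough q p₁, lineThrough q p₂} := by
    ext L
    simp only [mem_setOf_eq, mem_insert_iff, mem_singleton_iff]
    constructor
    · rintro ⟨hL, hqL, ⟨p, hpL, hpK⟩, hLi⟩
      have hpq : p ≠ q := fun h => hq (h ▸ hpK)
      have hLe : L = lineThrough q p := line_eq_lineThrough hL hqL hpL hpq
      have hm := hmin' p hpK
      have hM := hmax' p hpK
      rcases eq_or_lt_of_le hm with h | h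
      · left
        have hmem : p ∈ lineThrough q p₁ :=
          mem_lineThrough_of_fv_eq hab (hden_pos p₁ hp₁K) (hden_pos p hpK) h
        rw [hLe]
        exact (line_eq_lineThrough (isLine_lineThrough hp₁q) (q_mem_lineThrough q p₁)
          hmem hpq).symm
      · rcases eq_or_lt_of_le hM with h2 | h2
        · right
          have hmem : p ∈ lineThrough q p₂ :=
            mem_lineThrough_of_fv_eq hab (hden_pos p₂ hp₂K) (hden_pos p hpK) h2.symm
          rw [hLe]
          exact (line_eq_lineThrough (isLine_lineThrough hp₂q) (q_mem_lineThrough q p₂)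
            hmem hpq).symm
        · exfalso
          obtain ⟨x, hx1, hx2⟩ := hmid p hpK h h2
          rw [hLe] at hLi
          rw [eq_empty_iff_forall_notMem] at hLi
          exact hLi x ⟨hx1, hx2⟩
    · rintro (rfl | rfl)
      · exact ⟨isLine_lineThrough hp₁q, q_mem_lineThrough q p₁,
          ⟨⟨p₁, mem_lineThrough_self q p₁, hp₁K⟩, htan p₁ hp₁K (Or.inl rfl)⟩⟩
      · exact ⟨isLine_lineThrough hp₂q, q_mem_lineThrough q p₂,
          ⟨⟨p₂, mem_lineThrough_self q p₂, hp₂K⟩, htan p₂ hp₂K (Or.inr rfl)⟩⟩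
  rw [hset]
  exact Set.ncard_pair hLne
end
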